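/- If f : I → ℝ is convex and x, y ∈ I with x < y, then 0 ≤ (1/(y-x)) ∫ₓʸ f(t) dt − f((x+y)/2) ≤ (f(x)+f(y))/2 − (1/(y-x)) ∫ₓʸ f(t) dt; that is, the remainder of the Midpoint Rule is nonnegative and not greater than the remainder of the Trapezoid Rule. -/

import Mathlib

open MeasureTheory

set_option maxHeartbeats 1000000

private lemma convex_mem_Icc {I : Set ℝ} {f : ℝ → ℝ} (hf : ConvexOn ℝ I f) {a b : ℝ}
    (ha : a ∈ I) (hb : b ∈ I) : Set.Icc a b ⊆ I := by
  rcases le_or_gt a b with h | h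
  · rw [← segment_eq_Icc h]; exact hf.1.segment_subset ha hb
  · simp [Set.Icc_eq_empty_of_lt h]

private lemma convex_intIntegrable {I : Set ℝ} {f : ℝ → ℝ} (hf : ConvexOn ℝ I f) {a b : ℝ}
    (ha : a ∈ I) (hb : b ∈ I) (hab : a ≤ b) : IntervalIntegrable f volume a b := by
  have hsub : Set.Icc a b ⊆ I := convex_mem_Icc hf ha hb
  set m := (a + b) / 2 with hm
  have hmI : m ∈ I := hsub ⟨by linarith, by linarith⟩
  set C : ℝ := |max (f a) (f b)| + |2 * f m - max (f a) (f b)| with hC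
  have hub : ∀ t ∈ Set.Icc a b, f t ≤ max (f a) (f b) := by
    intro t ht
    exact hf.le_on_segment ha hb (by rwa [segment_eq_Icc hab])
  have hlb : ∀ t ∈ Set.Icc a b, 2 * f m - max (f a) (f b) ≤ f t := by
    intro t ht
    have ht' : a + b - t ∈ Set.Icc a b := ⟨by linarith [ht.2], by linarith [ht.1]⟩
    have h2 : f m ≤ (1/2 : ℝ) * f t + (1/2 : ℝ) * f (a + b - t) := by
      have hh := hf.2 (hsub ht) (hsub ht') (by norm_num : (0:ℝ) ≤ 1/2)
        (by norm_num : (0:ℝ) ≤ 1/2) (by norm_num)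
      have he : (1/2 : ℝ) • t + (1/2 : ℝ) • (a + b - t) = m := by
        simp [hm]; ring
      rw [he] at hh
      simpa [smul_eq_mul] using hh
    have h3 : f (a + b - t) ≤ max (f a) (f b) := hub _ ht'
    linarith
  have hbound : ∀ t ∈ Set.Ioo a b, ‖f t‖ ≤ C := by
    intro t ht
    have ht' : t ∈ Set.Icc a b := Set.Ioo_subset_Icc_self ht
    rw [Real.norm_eq_abs, abs_le]
    constructor
    · have h4 := neg_abs_le (2 * f m - max (f a) (f b))
      have h0 : (0:ℝ) ≤ |max (f a) (f b)| := abs_nonneg _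
      have := hlb t ht'
      rw [hC]; linarith
    · have := hub t ht'
      have h1 := le_abs_self (max (f a) (f b))
      have h0 : (0:ℝ) ≤ |2 * f m - max (f a) (f b)| := abs_nonneg _
      rw [hC]; linarith
  have hcont : ContinuousOn f (Set.Ioo a b) := by
    have hio : Set.Ioo a b ⊆ interior I := by
      rw [← interior_Icc]; exact interior_mono hsub
    exact (hf.continuousOn_interior).mono hio
  have hmeas : AEStronglyMeasurable f (volume.restrict (Set.Ioo a b)) :=
    hcont.aestronglyMeasurable measurableSet_Ioo
  have hInt : IntegrableOn f (Set.Ioo a b) volume := by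
    refine ⟨hmeas, HasFiniteIntegral.restrict_of_bounded (C := C) measure_Ioo_lt_top ?_⟩
    filter_upwards [ae_restrict_mem measurableSet_Ioo] with t ht using hbound t ht
  rw [intervalIntegrable_iff_integrableOn_Ioo_of_le hab]
  exact hInt

private lemma trapezoid {I : Set ℝ} {f : ℝ → ℝ} (hf : ConvexOn ℝ I f) {a b : ℝ}
    (ha : a ∈ I) (hb : b ∈ I) (hab : a < b) :
    ∫ t in a..b, f t ≤ (f a + f b) / 2 * (b - a) := by
  have hba : (0:ℝ) < b - a := by linarith
  have hmono : ∀ t ∈ Set.Icc a b, f t ≤ (f b - f a) / (b - a) * t + (f a * b - f b * a) / (b - a) := by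
    intro t ht
    have h1 : (0:ℝ) ≤ (b - t) / (b - a) := div_nonneg (by linarith [ht.2]) hba.le
    have h2 : (0:ℝ) ≤ (t - a) / (b - a) := div_nonneg (by linarith [ht.1]) hba.le
    have h3 : (b - t) / (b - a) + (t - a) / (b - a) = 1 := by field_simp; ring
    have hcv := hf.2 ha hb h1 h2 h3
    have he : ((b - t) / (b - a)) • a + ((t - a) / (b - a)) • b = t := by
      rw [smul_eq_mul, smul_eq_mul, div_mul_eq_mul_div, div_mul_eq_mul_div, ← add_div,
        div_eq_iff hba.ne']; ring
    rw [he] at hcv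
    simp only [smul_eq_mul] at hcv
    calc f t ≤ (b - t) / (b - a) * f a + (t - a) / (b - a) * f b := hcv
      _ = (f b - f a) / (b - a) * t + (f a * b - f b * a) / (b - a) := by field_simp; ring
  have hfi : IntervalIntegrable f volume a b := convex_intIntegrable hf ha hb hab.le
  have hgi : IntervalIntegrable (fun t => (f b - f a) / (b - a) * t + (f a * b - f b * a) / (b - a)) volume a b :=
    (Continuous.intervalIntegrable (by continuity) a b)
  calc ∫ t in a..b, f t
      ≤ ∫ t in a..b, ((f b - f a) / (b - a) * t + (f a * b - f b * a) / (b - a)) :=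
        intervalIntegral.integral_mono_on hab.le hfi hgi hmono
    _ = (f a + f b) / 2 * (b - a) := by
        rw [intervalIntegral.integral_add ((Continuous.intervalIntegrable (by continuity) a b))
            intervalIntegrable_const, intervalIntegral.integral_const_mul,
            integral_id, intervalIntegral.integral_const]
        have hne : b - a ≠ 0 := hba.ne'
        simp only [smul_eq_mul]
        field_simp
        ring

private lemma midpoint_le {I : Set ℝ} {f : ℝ → ℝ} (hf : ConvexOn ℝ I f) {a b : ℝ}
    (ha : a ∈ I) (hb : b ∈ I) (hab : a < b) :
    f ((a + b) / 2) * (b - a) ≤ ∫ t in a..b, f t := by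
  have hsub : Set.Icc a b ⊆ I := convex_mem_Icc hf ha hb
  have hfi : IntervalIntegrable f volume a b := convex_intIntegrable hf ha hb hab.le
  have hrefl : ∫ t in a..b, f (a + b - t) = ∫ t in a..b, f t := by
    have := intervalIntegral.integral_comp_sub_left (a := a) (b := b) f (a + b)
    simpa using this
  have hri : IntervalIntegrable (fun t => f (a + b - t)) volume a b := by
    have h := (hfi.comp_sub_left (a + b)).symm
    simpa using h
  have hpt : ∀ t ∈ Set.Icc a b, 2 * f ((a + b) / 2) ≤ f t + f (a + b - t) := by
    intro t ht
    have ht' : a + b - t ∈ Set.Icc a b := ⟨by linarith [ht.2], by linarith [ht.1]⟩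
    have hcv := hf.2 (hsub ht) (hsub ht') (by norm_num : (0:ℝ) ≤ 1/2)
      (by norm_num : (0:ℝ) ≤ 1/2) (by norm_num)
    have he : (1/2 : ℝ) • t + (1/2 : ℝ) • (a + b - t) = (a + b) / 2 := by
      simp; ring
    rw [he] at hcv
    simp only [smul_eq_mul] at hcv
    linarith
  have h := intervalIntegral.integral_mono_on hab.le intervalIntegrable_const
    (hfi.add hri) hpt
  rw [intervalIntegral.integral_const, intervalIntegral.integral_add hfi hri, hrefl] at h
  simp only [smul_eq_mul] at h
  linarith

theorem midpoint_remainder_le_trapezoid_remainder (I : Set ℝ) (f : ℝ → ℝ)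
    (hf : ConvexOn ℝ I f) (x y : ℝ) (hx : x ∈ I) (hy : y ∈ I) (hxy : x < y) :
    0 ≤ (1 / (y - x)) * (∫ t in x..y, f t) - f ((x + y) / 2) ∧
    (1 / (y - x)) * (∫ t in x..y, f t) - f ((x + y) / 2) ≤
      (f x + f y) / 2 - (1 / (y - x)) * ∫ t in x..y, f t := by
  have hyx : (0:ℝ) < y - x := by linarith
  have hsub : Set.Icc x y ⊆ I := convex_mem_Icc hf hx hy
  set m := (x + y) / 2 with hm
  have hmI : m ∈ I := hsub ⟨by linarith, by linarith⟩
  have hxm : x < m := by rw [hm]; linarith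
  have hmy : m < y := by rw [hm]; linarith
  have hmid : f m * (y - x) ≤ ∫ t in x..y, f t := midpoint_le hf hx hy hxy
  have ht1 : ∫ t in x..m, f t ≤ (f x + f m) / 2 * (m - x) := trapezoid hf hx hmI hxm
  have ht2 : ∫ t in m..y, f t ≤ (f m + f y) / 2 * (y - m) := trapezoid hf hmI hy hmy
  have hsplit : (∫ t in x..m, f t) + ∫ t in m..y, f t = ∫ t in x..y, f t :=
    intervalIntegral.integral_add_adjacent_intervals
      (convex_intIntegrable hf hx hmI hxm.le) (convex_intIntegrable hf hmI hy hmy.le)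
  have hI : ∫ t in x..y, f t ≤ (f x + f y) / 4 * (y - x) + f m / 2 * (y - x) := by
    have hmx : m - x = (y - x) / 2 := by rw [hm]; ring
    have hym : y - m = (y - x) / 2 := by rw [hm]; ring
    rw [← hsplit]; rw [hmx] at ht1; rw [hym] at ht2; linarith
  set A := (1 / (y - x)) * (∫ t in x..y, f t) with hA
  have hA1 : f m ≤ A := by
    rw [hA]
    have h := mul_nonneg (le_of_lt (one_div_pos.mpr hyx)) (sub_nonneg.mpr hmid)
    have he : 1 / (y - x) * ((∫ t in x..y, f t) - f m * (y - x))
        = 1 / (y - x) * (∫ t in x..y, f t) - f m := by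
      field_simp
    rw [he] at h
    linarith
  have hA2 : A ≤ (f x + f y) / 4 + f m / 2 := by
    rw [hA]
    have h := mul_le_mul_of_nonneg_left hI (le_of_lt (one_div_pos.mpr hyx))
    have he : 1 / (y - x) * ((f x + f y) / 4 * (y - x) + f m / 2 * (y - x))
        = (f x + f y) / 4 + f m / 2 := by field_simp
    rw [he] at h
    linarith
  exact ⟨by linarith, by linarith⟩
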